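/- Let (Ω,Σ,P) be a probability space, let K be a convex set of nonnegative random variables that is bounded in L^1(P), and let S be a countable subset of K. Assume the relative L^0(P)-topology on K is locally convex at every point of S, i.e., for every X ∈ S, every forward convex combination of any sequence in K that converges to X in P-probability also converges to X in P-probability. Then the relative L^0(P)-topology on K is uniformly locally convex-solid on S. -/

import Mathlib

open MeasureTheory Filter Set ProbabilityTheory

noncomputable section

namespace Paper

variable {Ω : Type*} [MeasurableSpace Ω]

/-- The metric `d(X,Y) = E_P[min(|X - Y|, 1)]` metrizing convergence in `P`-probability. -/
def probDist (P : Measure Ω) (X Y : Ω → ℝ) : ℝ :=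
  ∫ ω, min |X ω - Y ω| 1 ∂P

/-- `Q` is a probability measure equivalent to `P` (mutually absolutely continuous). -/
def EquivProb (P Q : Measure Ω) : Prop :=
  IsProbabilityMeasure Q ∧ Q ≪ P ∧ P ≪ Q

/-- `K` is a set of `P`-integrable random variables bounded in `L¹(P)`. -/
def BddL1 (P : Measure Ω) (K : Set (Ω → ℝ)) : Prop :=
  (∀ X ∈ K, Integrable X P) ∧ ∃ C : ℝ, ∀ X ∈ K, (∫ ω, |X ω| ∂P) ≤ C

/-- `K` is `Q`-uniformly integrable: all members are `Q`-integrable and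
`sup_{X ∈ K} E_Q[|X| · 1_{|X| > c}] → 0` as `c → ∞`. -/
def UIset (Q : Measure Ω) (K : Set (Ω → ℝ)) : Prop :=
  (∀ X ∈ K, Integrable X Q) ∧
  ∀ ε : ℝ, 0 < ε → ∃ c : ℝ, ∀ X ∈ K, (∫ ω in {ω | c < |X ω|}, |X ω| ∂Q) < ε

/-- The sequence `Xs` is Cauchy in `P`-probability. -/
def CauchyInProb (P : Measure Ω) (Xs : ℕ → Ω → ℝ) : Prop :=
  ∀ ε : ℝ, 0 < ε →
    Tendsto (fun p : ℕ × ℕ => P {ω | ε ≤ |Xs p.1 ω - Xs p.2 ω|}) atTop (nhds 0)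

/-- The (sequential) closure of `K` in the topology of convergence in `P`-probability. -/
def probClosure (P : Measure Ω) (K : Set (Ω → ℝ)) : Set (Ω → ℝ) :=
  {X | ∃ Xs : ℕ → Ω → ℝ, (∀ n, Xs n ∈ K) ∧ TendstoInMeasure P Xs atTop X}

/-- A set `W` of random variables is solid: if `X ∈ W` and `|Y| ≤ |X|` a.s. then `Y ∈ W`. -/
def SolidSet (P : Measure Ω) (W : Set (Ω → ℝ)) : Prop :=
  ∀ X ∈ W, ∀ Y : Ω → ℝ, AEStronglyMeasurable Y P →
    (∀ᵐ ω ∂P, |Y ω| ≤ |X ω|) → Y ∈ W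

/-- The solid hull of a set `A` of random variables. -/
def solidHull (P : Measure Ω) (A : Set (Ω → ℝ)) : Set (Ω → ℝ) :=
  {Y | AEStronglyMeasurable Y P ∧ ∃ X ∈ A, ∀ᵐ ω ∂P, |Y ω| ≤ |X ω|}

/-- The relative `L⁰(P)`-topology on `K` is uniformly locally convex-solid on `S`:
for every `ε > 0` there is a convex solid set `W` of integrable random variables contained in the
`ε`-ball around `0` such that, for each `X ∈ S`, `(X + W) ∩ K` contains a `d`-ball of `K`
around `X`. -/
def UnifLCS (P : Measure Ω) (K S : Set (Ω → ℝ)) : Prop :=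
  ∀ ε : ℝ, 0 < ε → ∃ W : Set (Ω → ℝ),
    (∀ Z ∈ W, Integrable Z P) ∧ Convex ℝ W ∧ SolidSet P W ∧
    (∀ Z ∈ W, probDist P Z 0 < ε) ∧
    ∀ X ∈ S, ∃ δ : ℝ, 0 < δ ∧ ∀ Z ∈ K, probDist P Z X < δ → Z - X ∈ W

/-- The `L⁰(Q)`- and `L¹(Q)`-topologies agree on `K`: a sequence in `K` converges in
`P`-probability to a member of `K` iff it converges in `L¹(Q)`-norm. -/
def TopAgree (P Q : Measure Ω) (K : Set (Ω → ℝ)) : Prop :=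
  ∀ (Xs : ℕ → Ω → ℝ) (X : Ω → ℝ), (∀ n, Xs n ∈ K) → X ∈ K →
    (TendstoInMeasure P Xs atTop X ↔
      Tendsto (fun n => ∫⁻ ω, ENNReal.ofReal |Xs n ω - X ω| ∂Q) atTop (nhds 0))

/-- `W` is a forward convex combination of the sequence `Z`. -/
def IsFCC (Z : ℕ → Ω → ℝ) (W : ℕ → Ω → ℝ) : Prop :=
  ∀ k, W k ∈ convexHull ℝ (Z '' {n | k ≤ n})

/-- The relative `L⁰(P)`-topology on `K` is locally convex at `X` (forward convex combination
formulation): every FCC of a sequence in `K` converging to `X` in probability also converges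
to `X` in probability. -/
def LocConvexAt (P : Measure Ω) (K : Set (Ω → ℝ)) (X : Ω → ℝ) : Prop :=
  ∀ Xs : ℕ → Ω → ℝ, (∀ n, Xs n ∈ K) → TendstoInMeasure P Xs atTop X →
    ∀ W : ℕ → Ω → ℝ, IsFCC Xs W → TendstoInMeasure P W atTop X

/-- The set `L = {Σ_k a_k R_k : Σ_k |a_k| ≤ 1}` (with pointwise a.e. absolutely convergent
series, which also converge in `L¹(P)`). -/
def Lset (R : ℕ → Ω → ℝ) : Set (Ω → ℝ) :=
  {G | ∃ a : ℕ → ℝ, Summable (fun k => |a k|) ∧ (∑' k, |a k|) ≤ 1 ∧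
    G = fun ω => ∑' k, a k * R k ω}

/-- The standard Cauchy distribution on `ℝ`. -/
def cauchyLaw : Measure ℝ :=
  MeasureTheory.volume.withDensity (fun t => ENNReal.ofReal (1 / (Real.pi * (1 + t ^ 2))))

/-- Local convexity of the relative topology on `A ⊆ E` at a point `x ∈ A`, in a topological
vector space. -/
def LocConvexAtTVS {E : Type*} [AddCommGroup E] [Module ℝ E] [TopologicalSpace E]
    (A : Set E) (x : E) : Prop :=
  ∀ V ∈ nhds (0 : E), ∃ U ∈ nhds (0 : E), ∃ C : Set E,
    Convex ℝ C ∧ ((fun u => x + u) '' U) ∩ A ⊆ C ∧ C ⊆ ((fun v => x + v) '' V) ∩ A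


section Aux
set_option linter.unusedSectionVars false
set_option linter.unusedVariables false
variable (P : Measure Ω) [IsProbabilityMeasure P]

lemma integrable_min_one {f : Ω → ℝ} (hf : AEStronglyMeasurable f P) :
    Integrable (fun ω => min |f ω| 1) P := by
  have habs : AEMeasurable (fun ω => |f ω|) P := by
    simpa [Real.norm_eq_abs] using hf.aemeasurable.norm
  refine ⟨(habs.min aemeasurable_const).aestronglyMeasurable, ?_⟩
  refine HasFiniteIntegral.of_bounded (C := 1) (ae_of_all _ fun ω => ?_)
  rw [Real.norm_eq_abs, abs_of_nonneg (le_min (abs_nonneg _) zero_le_one)]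
  exact min_le_right _ _

lemma probDist_nonneg (f g : Ω → ℝ) : 0 ≤ probDist P f g :=
  integral_nonneg fun ω => le_min (abs_nonneg _) zero_le_one

lemma probDist_mono {f g f' g' : Ω → ℝ} (hf : AEStronglyMeasurable (f - f') P)
    (hg : AEStronglyMeasurable (g - g') P)
    (h : ∀ᵐ ω ∂P, |f ω - f' ω| ≤ |g ω - g' ω|) : probDist P f f' ≤ probDist P g g' := by
  refine integral_mono_ae (integrable_min_one P hf) (integrable_min_one P hg) ?_
  filter_upwards [h] with ω hω
  exact min_le_min hω le_rfl

lemma min_add_le {a b : ℝ} (ha : 0 ≤ a) (hb : 0 ≤ b) :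
    min (a + b) 1 ≤ min a 1 + min b 1 := by
  rcases le_or_gt 1 a with h | h
  · have : min a 1 = 1 := min_eq_right h
    calc min (a+b) 1 ≤ 1 := min_le_right _ _
    _ ≤ min a 1 + min b 1 := by rw [this]; nlinarith [le_min hb zero_le_one]
  rcases le_or_gt 1 b with h' | h'
  · have : min b 1 = 1 := min_eq_right h'
    calc min (a+b) 1 ≤ 1 := min_le_right _ _
    _ ≤ min a 1 + min b 1 := by rw [this]; nlinarith [le_min ha zero_le_one]
  · calc min (a+b) 1 ≤ a + b := min_le_left _ _
    _ ≤ min a 1 + min b 1 := by rw [min_eq_left h.le, min_eq_left h'.le]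

lemma min_sum_le {ι : Type*} (F : Finset ι) (a : ι → ℝ) (ha : ∀ i ∈ F, 0 ≤ a i) :
    min (∑ i ∈ F, a i) 1 ≤ ∑ i ∈ F, min (a i) 1 := by
  classical
  induction F using Finset.induction_on with
  | empty => simp
  | @insert x s hx ih =>
    rw [Finset.sum_insert hx, Finset.sum_insert hx]
    have h1 : 0 ≤ a x := ha x (Finset.mem_insert_self x s)
    have h2 : 0 ≤ ∑ i ∈ s, a i := Finset.sum_nonneg fun i hi => ha i (Finset.mem_insert_of_mem hi)
    calc min (a x + ∑ i ∈ s, a i) 1 ≤ min (a x) 1 + min (∑ i ∈ s, a i) 1 := min_add_le h1 h2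
    _ ≤ min (a x) 1 + ∑ i ∈ s, min (a i) 1 := by
        gcongr
        exact ih fun i hi => ha i (Finset.mem_insert_of_mem hi)

lemma mem_hull_fin {E : Type*} [AddCommGroup E] [Module ℝ E] {s : Set E} {x : E}
    (hx : x ∈ convexHull ℝ s) :
    ∃ (N : ℕ) (w : Fin N → ℝ) (z : Fin N → E), (∀ j, 0 ≤ w j) ∧ (∑ j, w j) = 1 ∧
      (∀ j, z j ∈ s) ∧ x = ∑ j, w j • z j := by
  rw [convexHull_eq] at hx
  obtain ⟨ι, t, w, z, h0, h1, hz, hx⟩ := hx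
  refine ⟨t.card, fun j => w (t.equivFin.symm j), fun j => z (t.equivFin.symm j),
    fun j => h0 _ (t.equivFin.symm j).2, ?_, fun j => hz _ (t.equivFin.symm j).2, ?_⟩
  · rw [Equiv.sum_comp t.equivFin.symm (fun a : t => w a), Finset.sum_coe_sort t w, h1]
  · rw [Equiv.sum_comp t.equivFin.symm (fun a : t => w a • z a),
      Finset.sum_coe_sort t (fun a => w a • z a), ← hx, Finset.centerMass_eq_of_sum_1 _ _ h1]

lemma sum_mem_hull {E : Type*} [AddCommGroup E] [Module ℝ E] {s : Set E} {ι : Type*}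
    (F : Finset ι) (t : ι → ℝ) (y : ι → E) (h0 : ∀ i ∈ F, 0 ≤ t i)
    (h1 : ∑ i ∈ F, t i = 1) (hy : ∀ i ∈ F, y i ∈ s) :
    (∑ i ∈ F, t i • y i) ∈ convexHull ℝ s := by
  have := Finset.centerMass_mem_convexHull F h0 (by rw [h1]; norm_num) hy
  rwa [Finset.centerMass_eq_of_sum_1 _ _ h1] at this

lemma sum_pow_half_le (T : Finset ℕ) : ∑ n ∈ T, (1/2 : ℝ)^n ≤ 2 := by
  calc ∑ n ∈ T, (1/2 : ℝ)^n ≤ ∑' n, (1/2 : ℝ)^n :=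
        Summable.sum_le_tsum T (fun i _ => by positivity) summable_geometric_two
  _ = 2 := tsum_geometric_two

lemma tendstoInMeasure_of_probDist {f : ℕ → Ω → ℝ} {g : Ω → ℝ}
    (hf : ∀ n, AEStronglyMeasurable (f n) P) (hg : AEStronglyMeasurable g P)
    (h : Tendsto (fun n => probDist P (f n) g) atTop (nhds 0)) :
    TendstoInMeasure P f atTop g := by
  rw [tendstoInMeasure_iff_dist]
  intro ε hε
  set c : ℝ := min ε 1 with hc
  have hcpos : 0 < c := lt_min hε one_pos
  have bound : ∀ n, P {x | ε ≤ dist (f n x) (g x)} ≤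
      ENNReal.ofReal (probDist P (f n) g / c) := by
    intro n
    have hsub : {x | ε ≤ dist (f n x) (g x)} ⊆ {x | c ≤ min |f n x - g x| 1} := by
      intro x hx
      simp only [Real.dist_eq] at hx
      exact le_min (le_trans (min_le_left ε 1) hx) (min_le_right ε 1)
    have hint := integrable_min_one P ((hf n).sub hg)
    have hmarkov := mul_meas_ge_le_integral_of_nonneg
      (ae_of_all P fun x => le_min (abs_nonneg (f n x - g x)) zero_le_one) hint c
    have hfin : P {x | c ≤ min |f n x - g x| 1} ≠ ⊤ := measure_ne_top _ _
    calc P {x | ε ≤ dist (f n x) (g x)} ≤ P {x | c ≤ min |f n x - g x| 1} :=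
          measure_mono hsub
    _ = ENNReal.ofReal (P {x | c ≤ min |f n x - g x| 1}).toReal :=
          (ENNReal.ofReal_toReal hfin).symm
    _ ≤ ENNReal.ofReal (probDist P (f n) g / c) := by
          apply ENNReal.ofReal_le_ofReal
          rw [le_div_iff₀ hcpos, mul_comm]
          exact hmarkov
  have hlim : Tendsto (fun n => ENNReal.ofReal (probDist P (f n) g / c)) atTop (nhds 0) := by
    have : Tendsto (fun n => probDist P (f n) g / c) atTop (nhds 0) := by
      simpa using h.div_const c
    simpa using ENNReal.tendsto_ofReal this
  exact tendsto_of_tendsto_of_tendsto_of_le_of_le tendsto_const_nhds hlim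
    (fun n => zero_le) bound

lemma exists_probDist_lt {V : ℕ → Ω → ℝ} {X : Ω → ℝ}
    (hV : ∀ m, AEStronglyMeasurable (V m) P) (hX : AEStronglyMeasurable X P)
    (h : TendstoInMeasure P V atTop X) {η : ℝ} (hη : 0 < η) :
    ∃ m, probDist P (V m) X < η := by
  obtain ⟨ns, hns, hae⟩ := h.exists_seq_tendsto_ae
  have hdct : Tendsto (fun j => probDist P (V (ns j)) X) atTop (nhds 0) := by
    have h0 : (0:ℝ) = ∫ ω, (0:ℝ) ∂P := by simp
    rw [h0]
    apply tendsto_integral_of_dominated_convergence (fun _ => (1:ℝ))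
      (fun j => (integrable_min_one P ((hV (ns j)).sub hX)).1)
      (integrable_const 1)
    · intro j
      refine ae_of_all _ fun ω => ?_
      rw [Real.norm_eq_abs, abs_of_nonneg (le_min (abs_nonneg _) zero_le_one)]
      exact min_le_right _ _
    · filter_upwards [hae] with ω hω
      have : Tendsto (fun j => min |V (ns j) ω - X ω| 1) atTop (nhds (min |X ω - X ω| 1)) := by
        exact ((hω.sub tendsto_const_nhds).abs).min tendsto_const_nhds
      simpa using this
  obtain ⟨j, hj⟩ := (hdct.eventually (eventually_lt_nhds hη)).exists
  exact ⟨ns j, hj⟩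

lemma probDist_self (X : Ω → ℝ) : probDist P X X = 0 := by
  unfold probDist; simp

lemma hull_small {K : Set (Ω → ℝ)} (hKconv : Convex ℝ K)
    (hKint : ∀ Y ∈ K, Integrable Y P)
    {X : Ω → ℝ} (hXK : X ∈ K) (hX : LocConvexAt P K X) {η : ℝ} (hη : 0 < η) :
    ∃ δ : ℝ, 0 < δ ∧ ∀ V ∈ convexHull ℝ {Z | Z ∈ K ∧ probDist P Z X < δ},
      probDist P V X ≤ η := by
  by_contra hcon
  push_neg at hcon
  have hVm : ∀ m : ℕ, ∃ V, V ∈ convexHull ℝ {Z | Z ∈ K ∧ probDist P Z X < 1/(m+1)} ∧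
      η < probDist P V X := by
    intro m
    obtain ⟨V, hV1, hV2⟩ := hcon (1/(m+1)) (by positivity)
    exact ⟨V, hV1, hV2⟩
  choose V hVmem hVbig using hVm
  have hballsub : ∀ δ : ℝ, {Z | Z ∈ K ∧ probDist P Z X < δ} ⊆ K := fun δ Z hZ => hZ.1
  have hVK : ∀ m, V m ∈ K := fun m =>
    convexHull_min (hballsub _) hKconv (hVmem m)
  choose N w z hw0 hw1 hz hVeq using fun m => mem_hull_fin (hVmem m)
  set Xs : ℕ → Ω → ℝ := fun k =>
    if h : (Nat.unpair k).1 < N (Nat.unpair k).2 then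
      z (Nat.unpair k).2 ⟨(Nat.unpair k).1, h⟩ else X with hXsdef
  have hXsK : ∀ k, Xs k ∈ K := by
    intro k
    rw [hXsdef]
    dsimp only
    split
    · exact (hz _ _).1
    · exact hXK
  have hXsd1 : ∀ k (h : (Nat.unpair k).1 < N (Nat.unpair k).2),
      probDist P (Xs k) X < 1/((Nat.unpair k).2 + 1) := by
    intro k h
    have : Xs k = z (Nat.unpair k).2 ⟨(Nat.unpair k).1, h⟩ := by
      rw [hXsdef]; dsimp only; rw [dif_pos h]
    rw [this]
    exact (hz _ _).2
  have hXsd2 : ∀ k, ¬((Nat.unpair k).1 < N (Nat.unpair k).2) → Xs k = X := by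
    intro k h
    rw [hXsdef]; dsimp only; rw [dif_neg h]
  -- convergence of Xs to X in probDist
  have hXstend : Tendsto (fun k => probDist P (Xs k) X) atTop (nhds 0) := by
    rw [Metric.tendsto_atTop]
    intro ε' hε'
    obtain ⟨M, hM⟩ := exists_nat_one_div_lt hε'
    set Nmax := (Finset.range M).sup N with hNmax
    have hBfin : Set.Finite {k : ℕ | (Nat.unpair k).2 < M ∧ (Nat.unpair k).1 < N (Nat.unpair k).2} := by
      apply Set.Finite.subset (((Set.finite_Iio Nmax).prod (Set.finite_Iio M)).image
        (fun p : ℕ × ℕ => Nat.pair p.1 p.2))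
      rintro k ⟨h2, h1⟩
      refine ⟨((Nat.unpair k).1, (Nat.unpair k).2), Set.mem_prod.2 ⟨?_, ?_⟩, ?_⟩
      · exact lt_of_lt_of_le h1 (Finset.le_sup (Finset.mem_range.2 h2))
      · exact h2
      · exact Nat.pair_unpair k
    obtain ⟨b, hb⟩ := hBfin.bddAbove
    refine ⟨b + 1, fun k hk => ?_⟩
    have hknB : ¬((Nat.unpair k).2 < M ∧ (Nat.unpair k).1 < N (Nat.unpair k).2) := by
      intro hmem
      exact absurd (hb hmem) (by omega)
    rw [Real.dist_eq, sub_zero, abs_of_nonneg (probDist_nonneg P _ _)]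
    by_cases h1 : (Nat.unpair k).1 < N (Nat.unpair k).2
    · have hge : M ≤ (Nat.unpair k).2 := by
        by_contra hno
        exact hknB ⟨Nat.lt_of_not_le hno, h1⟩
      have hcast : (M:ℝ) ≤ ((Nat.unpair k).2 : ℝ) := Nat.cast_le.mpr hge
      calc probDist P (Xs k) X < 1/(((Nat.unpair k).2 : ℝ) + 1) := hXsd1 k h1
      _ ≤ 1/((M:ℝ) + 1) := by
          apply one_div_le_one_div_of_le (by positivity)
          linarith
      _ < ε' := hM
    · rw [hXsd2 k h1, probDist_self]
      exact hε'
  have hTIM : TendstoInMeasure P Xs atTop X :=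
    tendstoInMeasure_of_probDist P (fun k => (hKint _ (hXsK k)).1) (hKint _ hXK).1 hXstend
  have hFCC : IsFCC Xs V := by
    intro k
    rw [hVeq k]
    apply sum_mem_hull Finset.univ (w k) (fun j => z k j)
      (fun j _ => hw0 k j) (hw1 k)
    intro j _
    refine ⟨Nat.pair (j : ℕ) k, Nat.right_le_pair _ _, ?_⟩
    rw [hXsdef]
    dsimp only
    rw [Nat.unpair_pair]
    dsimp only
    rw [dif_pos j.2]
  have hTIMV : TendstoInMeasure P V atTop X := hX Xs hXsK hTIM V hFCC
  obtain ⟨m, hm⟩ := exists_probDist_lt P (fun m => (hKint _ (hVK m)).1) (hKint _ hXK).1 hTIMV hη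
  exact absurd hm (not_lt.2 (hVbig m).le)

lemma probDist_zero_eq (G : Ω → ℝ) : probDist P G 0 = ∫ ω, min |G ω| 1 ∂P := by
  simp [probDist]

lemma combo_small {X : Ω → ℝ} (hXi : Integrable X P) (hXpos : 0 ≤ᵐ[P] X)
    {η : ℝ} (hη : 0 < η) :
    ∃ δ : ℝ, 0 < δ ∧ ∀ (ι : Type) (F : Finset ι) (s : ι → ℝ) (g : ι → Ω → ℝ),
      (∀ i ∈ F, 0 ≤ s i) → (∑ i ∈ F, s i) = 1 →
      (∀ i ∈ F, AEStronglyMeasurable (g i) P) →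
      (∀ i ∈ F, ∀ᵐ ω ∂P, 0 ≤ g i ω ∧ g i ω ≤ X ω) →
      (∀ i ∈ F, probDist P (g i) 0 < δ) →
      probDist P (fun ω => ∑ i ∈ F, s i * g i ω) 0 ≤ η := by
  classical
  have hX1 : AEMeasurable (fun ω => (1:ℝ) + X ω) P := aemeasurable_const.add hXi.aemeasurable
  have haesm : ∀ m : ℕ, AEStronglyMeasurable (fun ω => min ((1/(m+1)) * (1 + X ω)) 1) P :=
    fun m => ((hX1.const_mul (1/(m+1))).min aemeasurable_const).aestronglyMeasurable
  have hint : ∀ m : ℕ, Integrable (fun ω => min ((1/(m+1)) * (1 + X ω)) 1) P := by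
    intro m
    refine ⟨haesm m, HasFiniteIntegral.of_bounded (C := 1) ?_⟩
    filter_upwards [hXpos] with ω hω
    simp only [Pi.zero_apply] at hω
    rw [Real.norm_eq_abs, abs_of_nonneg (le_min (mul_nonneg (by positivity) (by linarith)) zero_le_one)]
    exact min_le_right _ _
  have hdct : Tendsto (fun m : ℕ => ∫ ω, min ((1/(m+1)) * (1 + X ω)) 1 ∂P) atTop (nhds 0) := by
    have h0 : (0:ℝ) = ∫ ω, (0:ℝ) ∂P := by simp
    rw [h0]
    apply tendsto_integral_of_dominated_convergence (fun _ => (1:ℝ))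
      (fun m => (hint m).1) (integrable_const 1)
    · intro m
      filter_upwards [hXpos] with ω hω
      simp only [Pi.zero_apply] at hω
      rw [Real.norm_eq_abs, abs_of_nonneg (le_min (mul_nonneg (by positivity) (by linarith)) zero_le_one)]
      exact min_le_right _ _
    · refine ae_of_all _ fun ω => ?_
      have h1 : Tendsto (fun m : ℕ => (1/(m+1) : ℝ)) atTop (nhds 0) :=
        tendsto_one_div_add_atTop_nhds_zero_nat
      have := (h1.mul_const (1 + X ω)).min (tendsto_const_nhds (x := (1:ℝ)))
      simpa using this
  obtain ⟨m₀, hm₀⟩ := (hdct.eventually (eventually_lt_nhds (half_pos hη))).exists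
  set ρ : ℝ := 1/(m₀+1) with hρ
  have hρpos : 0 < ρ := by positivity
  set b : ℝ := min ρ (η/2) with hb
  have hbpos : 0 < b := lt_min hρpos (half_pos hη)
  refine ⟨b^2, by positivity, ?_⟩
  intro ι F s g hs0 hs1 hgm hgb hgd
  set G : Ω → ℝ := fun ω => ∑ i ∈ F, s i * g i ω with hG
  set U : Ω → ℝ := fun ω => ∑ i ∈ F, s i * min |g i ω| 1 with hU
  have hGm : AEStronglyMeasurable G P := by
    apply (Finset.aemeasurable_fun_sum F (fun i hi => (hgm i hi).aemeasurable.const_mul (s i))).aestronglyMeasurable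
  have hUm : AEStronglyMeasurable U P := by
    refine (Finset.aemeasurable_fun_sum F (fun i hi => ?_)).aestronglyMeasurable
    have habs : AEMeasurable (fun ω => |g i ω|) P := by
      simpa [Real.norm_eq_abs] using (hgm i hi).aemeasurable.norm
    exact (habs.min aemeasurable_const).const_mul (s i)
  have hU01 : ∀ ω, 0 ≤ U ω ∧ U ω ≤ 1 := by
    intro ω
    constructor
    · exact Finset.sum_nonneg fun i hi => mul_nonneg (hs0 i hi) (le_min (abs_nonneg _) zero_le_one)
    · calc U ω ≤ ∑ i ∈ F, s i * 1 := Finset.sum_le_sum fun i hi =>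
            mul_le_mul_of_nonneg_left (min_le_right _ _) (hs0 i hi)
      _ = 1 := by simp only [mul_one]; exact hs1
  have hUint : Integrable U P := by
    refine ⟨hUm, HasFiniteIntegral.of_bounded (C := 1) (ae_of_all _ fun ω => ?_)⟩
    rw [Real.norm_eq_abs, abs_of_nonneg (hU01 ω).1]
    exact (hU01 ω).2
  -- pointwise bound
  have hae : ∀ᵐ ω ∂P, min |G ω| 1 ≤ min (ρ * (1 + X ω)) 1 + U ω / b := by
    have hball : ∀ᵐ ω ∂P, ∀ i ∈ F, 0 ≤ g i ω ∧ g i ω ≤ X ω :=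
      (ae_ball_iff F.countable_toSet).2 fun i hi => hgb i hi
    filter_upwards [hball, hXpos] with ω hω hXω
    simp only [Pi.zero_apply] at hXω
    have hGpos : 0 ≤ G ω := Finset.sum_nonneg fun i hi => mul_nonneg (hs0 i hi) (hω i hi).1
    rcases le_or_gt (U ω) b with hUb | hUb
    · have hterm : ∀ i ∈ F, s i * g i ω ≤ (s i * min |g i ω| 1) * (1 + X ω) := by
        intro i hi
        obtain ⟨hg0, hgX⟩ := hω i hi
        rw [abs_of_nonneg hg0]
        rcases le_or_gt (g i ω) 1 with h1 | h1
        · rw [min_eq_left h1]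
          have hs := hs0 i hi
          nlinarith [mul_nonneg (mul_nonneg hs hg0) hXω]
        · rw [min_eq_right h1.le]
          have hs := hs0 i hi
          nlinarith [mul_le_mul_of_nonneg_left (show g i ω ≤ 1 + X ω by linarith) hs]
      have hGle : G ω ≤ U ω * (1 + X ω) := by
        calc G ω ≤ ∑ i ∈ F, (s i * min |g i ω| 1) * (1 + X ω) := Finset.sum_le_sum hterm
        _ = U ω * (1 + X ω) := by rw [hU]; rw [← Finset.sum_mul]
      have hGle2 : G ω ≤ ρ * (1 + X ω) := by
        have hble : b ≤ ρ := min_le_left _ _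
        calc G ω ≤ U ω * (1 + X ω) := hGle
        _ ≤ b * (1 + X ω) := by nlinarith
        _ ≤ ρ * (1 + X ω) := by nlinarith
      have : min |G ω| 1 ≤ min (ρ * (1 + X ω)) 1 := by
        rw [abs_of_nonneg hGpos]
        exact min_le_min hGle2 le_rfl
      have hUb0 : 0 ≤ U ω / b := div_nonneg (hU01 ω).1 hbpos.le
      linarith
    · have h1 : min |G ω| 1 ≤ 1 := min_le_right _ _
      have h2 : (1:ℝ) ≤ U ω / b := by
        rw [le_div_iff₀ hbpos]
        linarith
      have h3 : 0 ≤ min (ρ * (1 + X ω)) 1 := le_min (mul_nonneg hρpos.le (by linarith)) zero_le_one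
      linarith
  -- integrate
  have hGint : Integrable (fun ω => min |G ω| 1) P := integrable_min_one P hGm
  have hRint : Integrable (fun ω => min (ρ * (1 + X ω)) 1 + U ω / b) P :=
    (hint m₀).add (hUint.div_const b)
  have key : probDist P G 0 ≤ ∫ ω, (min (ρ * (1 + X ω)) 1 + U ω / b) ∂P := by
    rw [probDist_zero_eq]
    exact integral_mono_ae hGint hRint hae
  have hsplit : ∫ ω, (min (ρ * (1 + X ω)) 1 + U ω / b) ∂P
      = (∫ ω, min (ρ * (1 + X ω)) 1 ∂P) + (∫ ω, U ω ∂P) / b := by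
    rw [integral_add (hint m₀) (hUint.div_const b), integral_div]
  have hUle : ∫ ω, U ω ∂P ≤ b^2 := by
    have : ∫ ω, U ω ∂P = ∑ i ∈ F, s i * probDist P (g i) 0 := by
      rw [hU, integral_finset_sum]
      · refine Finset.sum_congr rfl fun i hi => ?_
        rw [integral_const_mul, probDist_zero_eq]
      · intro i hi
        exact ((integrable_min_one P (hgm i hi)).const_mul (s i))
    rw [this]
    calc ∑ i ∈ F, s i * probDist P (g i) 0 ≤ ∑ i ∈ F, s i * b^2 :=
          Finset.sum_le_sum fun i hi => mul_le_mul_of_nonneg_left (hgd i hi).le (hs0 i hi)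
    _ = b^2 := by rw [← Finset.sum_mul, hs1, one_mul]
  calc probDist P G 0 ≤ (∫ ω, min (ρ * (1 + X ω)) 1 ∂P) + (∫ ω, U ω ∂P) / b := by
        rw [← hsplit]; exact key
  _ ≤ η/2 + b := by
      have h1 : (∫ ω, min (ρ * (1 + X ω)) 1 ∂P) ≤ η/2 := hm₀.le
      have h2 : (∫ ω, U ω ∂P) / b ≤ b := by
        rw [div_le_iff₀ hbpos]
        calc ∫ ω, U ω ∂P ≤ b^2 := hUle
        _ = b * b := sq b
      linarith
  _ ≤ η := by
      have : b ≤ η/2 := min_le_right _ _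
      linarith


lemma min_two_mul {d : ℝ} (hd : 0 ≤ d) : min (2*d) 1 ≤ 2 * min d 1 := by
  rcases le_total d 1 with h | h
  · rw [min_eq_left h]
    exact min_le_left _ _
  · calc min (2*d) 1 ≤ 1 := min_le_right _ _
    _ ≤ 2 * min d 1 := by rw [min_eq_right h]; norm_num

lemma abs_sub_eq' (a b : ℝ) : |a - b| = (a - b) + 2 * max (b - a) 0 := by
  rcases le_total b a with h | h
  · rw [abs_of_nonneg (by linarith), max_eq_right (by linarith)]
    ring
  · rw [abs_of_nonpos (by linarith), max_eq_left (by linarith)]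
    ring


end Aux

set_option maxHeartbeats 1000000 in
/-- Proposition 3.6: for a convex `L¹(P)`-bounded set of nonnegative random variables,
local convexity at each point of a countable subset `S` upgrades to uniform local
convex-solidity on `S`. -/
theorem statement8 (P : Measure Ω) [IsProbabilityMeasure P]
    (K S : Set (Ω → ℝ)) (hKconv : Convex ℝ K) (hKbdd : BddL1 P K)
    (hKpos : ∀ X ∈ K, (0 : Ω → ℝ) ≤ᵐ[P] X)
    (hS : S.Nonempty) (hSsub : S ⊆ K) (hScount : S.Countable)
    (hlc : ∀ X ∈ S, LocConvexAt P K X) :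
    UnifLCS P K S := by
  classical
  obtain ⟨e, hSe⟩ := hScount.exists_eq_range hS
  have heS : ∀ n, e n ∈ S := fun n => hSe ▸ Set.mem_range_self n
  have heK : ∀ n, e n ∈ K := fun n => hSsub (heS n)
  have hKint : ∀ Y ∈ K, Integrable Y P := hKbdd.1
  intro ε hε
  set η : ℕ → ℝ := fun n => ε/16 * (1/2)^n with hηdef
  have hηpos : ∀ n, 0 < η n := fun n => by positivity
  have hδA : ∀ n, ∃ δ, 0 < δ ∧ ∀ V ∈ convexHull ℝ {Z | Z ∈ K ∧ probDist P Z (e n) < δ},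
      probDist P V (e n) ≤ η n := fun n =>
    hull_small P hKconv hKint (heK n) (hlc (e n) (heS n)) (hηpos n)
  choose δA hδApos hδAsmall using hδA
  have hδB := fun n => combo_small P (hKint _ (heK n)) (hKpos _ (heK n)) (hηpos n)
  choose δB hδBpos hδBsmall using hδB
  set δ : ℕ → ℝ := fun n => min (δA n) (δB n) with hδdef
  have hδpos : ∀ n, 0 < δ n := fun n => lt_min (hδApos n) (hδBpos n)
  set A : ℕ → Set (Ω → ℝ) := fun n =>
    {Y | AEStronglyMeasurable Y P ∧ ∃ Z, Z ∈ K ∧ probDist P Z (e n) < δ n ∧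
      ∀ᵐ ω ∂P, |Y ω| ≤ |Z ω - e n ω|} with hAdef
  -- a canonical finite representation of elements of the hull
  have hrep : ∀ G ∈ convexHull ℝ (⋃ n, A n), ∃ (N : ℕ) (w : Fin N → ℝ) (Y : Fin N → Ω → ℝ)
      (c : Fin N → ℕ) (Z : Fin N → Ω → ℝ),
      (∀ j, 0 ≤ w j) ∧ (∑ j, w j) = 1 ∧
      (∀ j, AEStronglyMeasurable (Y j) P) ∧
      (∀ j, Z j ∈ K) ∧ (∀ j, probDist P (Z j) (e (c j)) < δ (c j)) ∧
      (∀ j, ∀ᵐ ω ∂P, |Y j ω| ≤ |Z j ω - e (c j) ω|) ∧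
      G = ∑ j, w j • Y j := by
    intro G hG
    obtain ⟨N, w, Y, hw0, hw1, hY, hGeq⟩ := mem_hull_fin hG
    have hc : ∀ j, ∃ n, Y j ∈ A n := fun j => Set.mem_iUnion.1 (hY j)
    choose c hcY using hc
    have hYm : ∀ j, AEStronglyMeasurable (Y j) P := fun j => (hcY j).1
    choose Z hZK hZd hdom using fun j => (hcY j).2
    exact ⟨N, w, Y, c, Z, hw0, hw1, hYm, hZK, hZd, hdom, hGeq⟩
  have hYint : ∀ (Y Z : Ω → ℝ) (n : ℕ), AEStronglyMeasurable Y P → Z ∈ K →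
      (∀ᵐ ω ∂P, |Y ω| ≤ |Z ω - e n ω|) → Integrable Y P := by
    intro Y Z n hYm hZK hd
    refine Integrable.mono ((hKint _ hZK).sub (hKint _ (heK n))) hYm ?_
    filter_upwards [hd] with ω hω
    simpa [Real.norm_eq_abs, Pi.sub_apply] using hω
  refine ⟨convexHull ℝ (⋃ n, A n), ?_, convex_convexHull ℝ _, ?_, ?_, ?_⟩
  · -- integrability
    intro G hG
    obtain ⟨N, w, Y, c, Z, hw0, hw1, hYm, hZK, hZd, hdom, hGeq⟩ := hrep G hG
    rw [hGeq]
    exact integrable_finset_sum' _ fun j _ =>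
      (hYint (Y j) (Z j) (c j) (hYm j) (hZK j) (hdom j)).smul (w j)
  · -- solidity
    intro G hG Y' hY'm hY'le
    obtain ⟨N, w, Y, c, Z, hw0, hw1, hYm, hZK, hZd, hdom, hGeq⟩ := hrep G hG
    set h : Ω → ℝ := fun ω => ∑ j, w j * |Y j ω| with hh
    have hhnn : ∀ ω, 0 ≤ h ω := fun ω =>
      Finset.sum_nonneg fun j _ => mul_nonneg (hw0 j) (abs_nonneg _)
    set sf : Fin N → Ω → ℝ := fun j ω => if h ω = 0 then 1 else |Y j ω| / h ω with hsf
    have hsfnn : ∀ j ω, 0 ≤ sf j ω := by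
      intro j ω
      rw [hsf]
      dsimp only
      split
      · norm_num
      · exact div_nonneg (abs_nonneg _) (hhnn ω)
    have hsum1 : ∀ ω, ∑ j, w j * sf j ω = 1 := by
      intro ω
      rw [hsf]
      dsimp only
      by_cases h0 : h ω = 0
      · have hone : ∀ j : Fin N, (if h ω = 0 then (1:ℝ) else |Y j ω| / h ω) = 1 :=
          fun j => if_pos h0
        simp only [hone, mul_one]
        exact hw1
      · have hone : ∀ j : Fin N, (if h ω = 0 then (1:ℝ) else |Y j ω| / h ω) = |Y j ω| / h ω :=
          fun j => if_neg h0
        simp only [hone]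
        rw [show ∑ j, w j * (|Y j ω| / h ω) = (∑ j, w j * |Y j ω|) / h ω by
            rw [Finset.sum_div]; exact Finset.sum_congr rfl fun j _ => (mul_div_assoc _ _ _).symm]
        exact div_self h0
    have hGabs : ∀ ω, |G ω| ≤ h ω := by
      intro ω
      rw [hGeq, hh]
      calc |(∑ j, w j • Y j) ω| = |∑ j, w j * Y j ω| := by
            rw [Finset.sum_apply]; simp [Pi.smul_apply]
      _ ≤ ∑ j, |w j * Y j ω| := Finset.abs_sum_le_sum_abs _ _
      _ = ∑ j, w j * |Y j ω| := Finset.sum_congr rfl fun j _ => by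
            rw [abs_mul, abs_of_nonneg (hw0 j)]
    -- measurability of sf
    have hsfm : ∀ j, AEStronglyMeasurable (sf j) P := by
      intro j
      have hmk : ∀ i : Fin N, Measurable ((hYm i).mk (Y i)) :=
        fun i => (hYm i).stronglyMeasurable_mk.measurable
      set hhat : Ω → ℝ := fun ω => ∑ i, w i * |(hYm i).mk (Y i) ω| with hhhat
      have habsmk : ∀ i : Fin N, Measurable (fun ω => |(hYm i).mk (Y i) ω|) := by
        intro i
        simpa [Real.norm_eq_abs] using (hmk i).norm
      have hhatm : Measurable hhat :=
        Finset.measurable_sum _ fun i _ => (habsmk i).const_mul (w i)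
      refine ⟨fun ω => if hhat ω = 0 then 1 else |(hYm j).mk (Y j) ω| / hhat ω, ?_, ?_⟩
      · apply Measurable.stronglyMeasurable
        exact Measurable.ite (hhatm (measurableSet_singleton 0)) measurable_const
          ((habsmk j).div hhatm)
      · have hall : ∀ᵐ ω ∂P, ∀ i : Fin N, Y i ω = (hYm i).mk (Y i) ω :=
          ae_all_iff.2 fun i => (hYm i).ae_eq_mk
        filter_upwards [hall] with ω hω
        rw [hsf]
        dsimp only
        have he1 : h ω = hhat ω := by
          rw [hh, hhhat]
          exact Finset.sum_congr rfl fun i _ => by rw [hω i]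
        rw [he1, hω j]
    set Y2 : Fin N → Ω → ℝ := fun j ω => Y' ω * sf j ω with hY2
    have hY2m : ∀ j, AEStronglyMeasurable (Y2 j) P := fun j => hY'm.mul (hsfm j)
    have hY2dom : ∀ j, ∀ᵐ ω ∂P, |Y2 j ω| ≤ |Y j ω| := by
      intro j
      filter_upwards [hY'le] with ω hω
      rw [hY2]
      dsimp only
      rw [hsf]
      dsimp only
      by_cases h0 : h ω = 0
      · rw [if_pos h0, mul_one]
        have : |Y' ω| ≤ 0 := by
          calc |Y' ω| ≤ |G ω| := hω
          _ ≤ h ω := hGabs ω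
          _ = 0 := h0
        calc |Y' ω| ≤ 0 := this
        _ ≤ |Y j ω| := abs_nonneg _
      · rw [if_neg h0]
        have hY'h : |Y' ω| ≤ h ω := le_trans hω (hGabs ω)
        rw [abs_mul, abs_of_nonneg (div_nonneg (abs_nonneg _) (hhnn ω))]
        calc |Y' ω| * (|Y j ω| / h ω) ≤ h ω * (|Y j ω| / h ω) := by
              apply mul_le_mul_of_nonneg_right hY'h
              exact div_nonneg (abs_nonneg _) (hhnn ω)
        _ = |Y j ω| := by
              rw [mul_comm, div_mul_cancel₀ _ h0]
    have hY2mem : ∀ j, Y2 j ∈ A (c j) := by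
      intro j
      refine ⟨hY2m j, Z j, hZK j, hZd j, ?_⟩
      filter_upwards [hY2dom j, hdom j] with ω h1 h2
      exact le_trans h1 h2
    have : Y' = ∑ j, w j • Y2 j := by
      funext ω
      rw [Finset.sum_apply]
      simp only [Pi.smul_apply, smul_eq_mul, hY2]
      calc Y' ω = Y' ω * ∑ j, w j * sf j ω := by rw [hsum1 ω, mul_one]
      _ = ∑ j, w j * (Y' ω * sf j ω) := by rw [Finset.mul_sum]; exact Finset.sum_congr rfl fun j _ => by ring
    rw [this]
    exact sum_mem_hull Finset.univ w Y2 (fun j _ => hw0 j) hw1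
      (fun j _ => Set.mem_iUnion.2 ⟨c j, hY2mem j⟩)
  · -- smallness
    intro G hG
    obtain ⟨N, w, Y, c, Z, hw0, hw1, hYm, hZK, hZd, hdom, hGeq⟩ := hrep G hG
    have hGint : Integrable G P := by
      rw [hGeq]
      exact integrable_finset_sum' _ fun j _ =>
        (hYint (Y j) (Z j) (c j) (hYm j) (hZK j) (hdom j)).smul (w j)
    set F : Finset (Fin N) := Finset.univ.filter (fun j => w j ≠ 0) with hF
    have hwF : ∀ j ∈ F, 0 < w j := fun j hj =>
      lt_of_le_of_ne (hw0 j) (Ne.symm (Finset.mem_filter.1 hj).2)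
    have hw1' : ∑ j ∈ F, w j = 1 := by
      rw [hF, Finset.sum_filter_ne_zero]
      exact hw1
    set T : Finset ℕ := F.image c with hT
    set Fn : ℕ → Finset (Fin N) := fun n => F.filter (fun j => c j = n) with hFnd
    set u : ℕ → ℝ := fun n => ∑ j ∈ Fn n, w j with hu
    have husum : ∑ n ∈ T, u n = 1 := by
      rw [hT, hu]
      rw [Finset.sum_fiberwise_of_maps_to (fun j hj => Finset.mem_image_of_mem c hj) w]
      exact hw1'
    have hupos : ∀ n ∈ T, 0 < u n := by
      intro n hn
      obtain ⟨j, hjF, hjc⟩ := Finset.mem_image.1 hn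
      exact Finset.sum_pos' (fun i _ => hw0 i) ⟨j, Finset.mem_filter.2 ⟨hjF, hjc⟩, hwF j hjF⟩
    have hule : ∀ n ∈ T, u n ≤ 1 := by
      intro n hn
      rw [← husum]
      refine Finset.single_le_sum (fun m hm => ?_) hn
      exact Finset.sum_nonneg fun j _ => hw0 j
    set Vn : ℕ → Ω → ℝ := fun n ω => (u n)⁻¹ * ∑ j ∈ Fn n, w j * Z j ω with hVnd
    set Dn : ℕ → Ω → ℝ := fun n ω => ∑ j ∈ Fn n, ((u n)⁻¹ * w j) * max (e n ω - Z j ω) 0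
      with hDnd
    have hDnn : ∀ n ∈ T, ∀ ω, 0 ≤ Dn n ω := fun n hn ω =>
      Finset.sum_nonneg fun j _ => mul_nonneg
        (mul_nonneg (inv_nonneg.2 (hupos n hn).le) (hw0 j)) (le_max_right _ _)
    -- membership of the fiber barycenters in small hulls
    have hVmem : ∀ n ∈ T, Vn n ∈ convexHull ℝ {Z' | Z' ∈ K ∧ probDist P Z' (e n) < δA n} := by
      intro n hn
      have hmem : ∀ j ∈ Fn n, Z j ∈ {Z' | Z' ∈ K ∧ probDist P Z' (e n) < δA n} := by
        intro j hj
        have hcj : c j = n := (Finset.mem_filter.1 hj).2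
        refine ⟨hZK j, ?_⟩
        have := hZd j
        rw [hcj] at this
        exact lt_of_lt_of_le this (min_le_left _ _)
      have hcm := Finset.centerMass_mem_convexHull (Fn n) (fun j _ => hw0 j)
        (hupos n hn) hmem
      have heq : (Fn n).centerMass w Z = Vn n := by
        rw [Finset.centerMass]
        funext ω
        rw [Pi.smul_apply, Finset.sum_apply, hVnd]
        simp only [Pi.smul_apply, smul_eq_mul]
        rfl
      rwa [heq] at hcm
    have hVd : ∀ n ∈ T, probDist P (Vn n) (e n) ≤ η n := fun n hn =>
      hδAsmall n _ (hVmem n hn)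
    -- the downward parts are uniformly small
    have hDd : ∀ n ∈ T, probDist P (Dn n) 0 ≤ η n := by
      intro n hn
      have hune : u n ≠ 0 := (hupos n hn).ne'
      refine hδBsmall n (Fin N) (Fn n) (fun j => (u n)⁻¹ * w j)
        (fun j ω => max (e n ω - Z j ω) 0) ?_ ?_ ?_ ?_ ?_
      · exact fun j _ => mul_nonneg (inv_nonneg.2 (hupos n hn).le) (hw0 j)
      · rw [← Finset.mul_sum]
        exact inv_mul_cancel₀ hune
      · intro j _
        exact (((hKint _ (heK n)).aemeasurable.sub
          (hKint _ (hZK j)).aemeasurable).max aemeasurable_const).aestronglyMeasurable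
      · intro j _
        filter_upwards [hKpos _ (hZK j), hKpos _ (heK n)] with ω h1 h2
        simp only [Pi.zero_apply] at h1 h2
        exact ⟨le_max_right _ _, max_le (by linarith) h2⟩
      · intro j hj
        have hcj : c j = n := (Finset.mem_filter.1 hj).2
        have hZd' : probDist P (Z j) (e n) < δ n := hcj ▸ hZd j
        have hm1 : AEStronglyMeasurable (fun ω => max (e n ω - Z j ω) 0) P :=
          (((hKint _ (heK n)).aemeasurable.sub
            (hKint _ (hZK j)).aemeasurable).max aemeasurable_const).aestronglyMeasurable
        have hm2 : AEStronglyMeasurable (fun ω => Z j ω - e n ω) P :=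
          ((hKint _ (hZK j)).aemeasurable.sub (hKint _ (heK n)).aemeasurable).aestronglyMeasurable
        have hle : probDist P (fun ω => max (e n ω - Z j ω) 0) 0 ≤ probDist P (Z j) (e n) := by
          rw [probDist_zero_eq]
          show (∫ ω, min |max (e n ω - Z j ω) 0| 1 ∂P) ≤ ∫ ω, min |Z j ω - e n ω| 1 ∂P
          refine integral_mono_ae (integrable_min_one P hm1) (integrable_min_one P hm2)
            (ae_of_all _ fun ω => ?_)
          refine min_le_min ?_ le_rfl
          rw [abs_of_nonneg (le_max_right _ _), abs_sub_comm]
          exact max_le (le_abs_self _) (abs_nonneg _)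
        calc probDist P (fun ω => max (e n ω - Z j ω) 0) 0 ≤ probDist P (Z j) (e n) := hle
        _ < δ n := hZd'
        _ ≤ δB n := min_le_right _ _
    -- measurability and integrability of the pieces
    have hVem : ∀ n, AEStronglyMeasurable (fun ω => Vn n ω - e n ω) P := by
      intro n
      refine (AEMeasurable.sub ?_ (hKint _ (heK n)).aemeasurable).aestronglyMeasurable
      exact (Finset.aemeasurable_fun_sum _ fun j _ =>
        (hKint _ (hZK j)).aemeasurable.const_mul (w j)).const_mul (u n)⁻¹
    have hDnm : ∀ n, AEStronglyMeasurable (Dn n) P := by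
      intro n
      refine (Finset.aemeasurable_fun_sum _ fun j _ => ?_).aestronglyMeasurable
      exact (((hKint _ (heK n)).aemeasurable.sub
        (hKint _ (hZK j)).aemeasurable).max aemeasurable_const).const_mul _
    have hint1 : ∀ n, Integrable (fun ω => min |Vn n ω - e n ω| 1) P :=
      fun n => integrable_min_one P (hVem n)
    have hint2 : ∀ n, Integrable (fun ω => min |Dn n ω| 1) P :=
      fun n => integrable_min_one P (hDnm n)
    have hintterm : ∀ n, Integrable
        (fun ω => min |Vn n ω - e n ω| 1 + 2 * min |Dn n ω| 1) P :=
      fun n => (hint1 n).add ((hint2 n).const_mul 2)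
    have hintR : Integrable
        (fun ω => ∑ n ∈ T, (min |Vn n ω - e n ω| 1 + 2 * min |Dn n ω| 1)) P :=
      integrable_finset_sum T fun n _ => hintterm n
    -- the master pointwise bound
    have hmaster : ∀ᵐ ω ∂P, min |G ω| 1 ≤
        ∑ n ∈ T, (min |Vn n ω - e n ω| 1 + 2 * min |Dn n ω| 1) := by
      have hballdom : ∀ᵐ ω ∂P, ∀ j : Fin N, |Y j ω| ≤ |Z j ω - e (c j) ω| :=
        ae_all_iff.2 hdom
      filter_upwards [hballdom] with ω hω
      have h1 : |G ω| ≤ ∑ j ∈ F, w j * |Z j ω - e (c j) ω| := by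
        rw [hGeq]
        calc |(∑ j, w j • Y j) ω| = |∑ j, w j * Y j ω| := by
              rw [Finset.sum_apply]; simp only [Pi.smul_apply, smul_eq_mul]
        _ = |∑ j ∈ F, w j * Y j ω| := by
              rw [hF, Finset.sum_filter_of_ne]
              intro x _ hx
              intro h0
              exact hx (by rw [h0, zero_mul])
        _ ≤ ∑ j ∈ F, |w j * Y j ω| := Finset.abs_sum_le_sum_abs _ _
        _ = ∑ j ∈ F, w j * |Y j ω| := Finset.sum_congr rfl fun j _ => by
              rw [abs_mul, abs_of_nonneg (hw0 j)]
        _ ≤ ∑ j ∈ F, w j * |Z j ω - e (c j) ω| := Finset.sum_le_sum fun j _ =>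
              mul_le_mul_of_nonneg_left (hω j) (hw0 j)
      have h2 : ∑ j ∈ F, w j * |Z j ω - e (c j) ω|
          = ∑ n ∈ T, ∑ j ∈ Fn n, w j * |Z j ω - e n ω| := by
        rw [hT, ← Finset.sum_fiberwise_of_maps_to
          (fun j hj => Finset.mem_image_of_mem c hj)
          (fun j => w j * |Z j ω - e (c j) ω|)]
        refine Finset.sum_congr rfl fun n hn => Finset.sum_congr rfl fun j hj => ?_
        rw [(Finset.mem_filter.1 hj).2]
      have h3 : ∀ n ∈ T, ∑ j ∈ Fn n, w j * |Z j ω - e n ω|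
          = u n * ((Vn n ω - e n ω) + 2 * Dn n ω) := by
        intro n hn
        have hune : u n ≠ 0 := (hupos n hn).ne'
        have e2 : u n * Vn n ω = ∑ j ∈ Fn n, w j * Z j ω := by
          rw [hVnd]
          dsimp only
          rw [← mul_assoc, mul_inv_cancel₀ hune, one_mul]
        have e1 : u n * e n ω = ∑ j ∈ Fn n, w j * e n ω := by
          rw [hu, Finset.sum_mul]
        have e3 : u n * Dn n ω = ∑ j ∈ Fn n, w j * max (e n ω - Z j ω) 0 := by
          rw [hDnd]
          dsimp only
          rw [Finset.mul_sum]
          refine Finset.sum_congr rfl fun j hj => ?_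
          field_simp
        have expand : u n * ((Vn n ω - e n ω) + 2 * Dn n ω)
            = (u n * Vn n ω - u n * e n ω) + 2 * (u n * Dn n ω) := by ring
        rw [expand, e2, e1, e3, ← Finset.sum_sub_distrib, Finset.mul_sum,
          ← Finset.sum_add_distrib]
        refine Finset.sum_congr rfl fun j hj => ?_
        rw [abs_sub_eq' (Z j ω) (e n ω)]
        ring
      have hRnn : ∀ n ∈ T, 0 ≤ ∑ j ∈ Fn n, w j * |Z j ω - e n ω| := fun n _ =>
        Finset.sum_nonneg fun j _ => mul_nonneg (hw0 j) (abs_nonneg _)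
      calc min |G ω| 1 ≤ min (∑ n ∈ T, ∑ j ∈ Fn n, w j * |Z j ω - e n ω|) 1 :=
            min_le_min (h1.trans_eq h2) le_rfl
      _ ≤ ∑ n ∈ T, min (∑ j ∈ Fn n, w j * |Z j ω - e n ω|) 1 :=
            min_sum_le T _ hRnn
      _ ≤ ∑ n ∈ T, (min |Vn n ω - e n ω| 1 + 2 * min |Dn n ω| 1) := by
            refine Finset.sum_le_sum fun n hn => ?_
            have hD0 : 0 ≤ Dn n ω := hDnn n hn ω
            have hx0 : 0 ≤ (Vn n ω - e n ω) + 2 * Dn n ω := by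
              have h30 := (h3 n hn) ▸ hRnn n hn
              nlinarith [hupos n hn]
            calc min (∑ j ∈ Fn n, w j * |Z j ω - e n ω|) 1
                = min (u n * ((Vn n ω - e n ω) + 2 * Dn n ω)) 1 := by rw [h3 n hn]
            _ ≤ min ((Vn n ω - e n ω) + 2 * Dn n ω) 1 := by
                  refine min_le_min ?_ le_rfl
                  nlinarith [hule n hn, hupos n hn]
            _ ≤ min (|Vn n ω - e n ω| + 2 * Dn n ω) 1 := by
                  refine min_le_min ?_ le_rfl
                  have := le_abs_self (Vn n ω - e n ω)
                  linarith
            _ ≤ min |Vn n ω - e n ω| 1 + min (2 * Dn n ω) 1 :=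
                  min_add_le (abs_nonneg _) (by linarith)
            _ ≤ min |Vn n ω - e n ω| 1 + 2 * min (Dn n ω) 1 := by
                  have := min_two_mul hD0
                  linarith
            _ = min |Vn n ω - e n ω| 1 + 2 * min |Dn n ω| 1 := by
                  rw [abs_of_nonneg hD0]
    -- integrate the master bound
    have hkey : probDist P G 0 ≤
        ∑ n ∈ T, (probDist P (Vn n) (e n) + 2 * probDist P (Dn n) 0) := by
      calc probDist P G 0 = ∫ ω, min |G ω| 1 ∂P := probDist_zero_eq P G
      _ ≤ ∫ ω, (∑ n ∈ T, (min |Vn n ω - e n ω| 1 + 2 * min |Dn n ω| 1)) ∂P :=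
            integral_mono_ae (integrable_min_one P hGint.1) hintR hmaster
      _ = ∑ n ∈ T, ∫ ω, (min |Vn n ω - e n ω| 1 + 2 * min |Dn n ω| 1) ∂P :=
            integral_finset_sum T fun n _ => hintterm n
      _ = ∑ n ∈ T, (probDist P (Vn n) (e n) + 2 * probDist P (Dn n) 0) := by
            refine Finset.sum_congr rfl fun n hn => ?_
            rw [integral_add (hint1 n) ((hint2 n).const_mul 2), integral_const_mul]
            rw [probDist_zero_eq]
            rfl
    have hfinal : ∑ n ∈ T, (probDist P (Vn n) (e n) + 2 * probDist P (Dn n) 0)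
        ≤ 3 * (ε/16) * 2 := by
      calc ∑ n ∈ T, (probDist P (Vn n) (e n) + 2 * probDist P (Dn n) 0)
          ≤ ∑ n ∈ T, 3 * η n := by
            refine Finset.sum_le_sum fun n hn => ?_
            have := hVd n hn
            have := hDd n hn
            linarith
      _ = 3 * (ε/16) * ∑ n ∈ T, (1/2:ℝ)^n := by
            rw [Finset.mul_sum]
            refine Finset.sum_congr rfl fun n _ => ?_
            rw [hηdef]
            ring
      _ ≤ 3 * (ε/16) * 2 := by
            have := sum_pow_half_le T
            nlinarith [hε]
    calc probDist P G 0 ≤ 3 * (ε/16) * 2 := le_trans hkey hfinal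
    _ < ε := by linarith
  · -- the balls
    intro X hX
    rw [hSe] at hX
    obtain ⟨n, rfl⟩ := hX
    refine ⟨δ n, hδpos n, fun Z hZ hd => ?_⟩
    apply subset_convexHull
    refine Set.mem_iUnion.2 ⟨n, ⟨((hKint _ hZ).sub (hKint _ (heK n))).1, Z, hZ, hd, ?_⟩⟩
    exact ae_of_all _ fun ω => le_of_eq (by simp [Pi.sub_apply])


end Paper
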